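/- Let C ⊆ X be a cone in a real normed space. Then cl(conv(B_{cl C})) = cl(conv(B_C)), where B_D := D ∩ S_X denotes the norm-base of a cone D (the intersection with the unit sphere). -/

import Mathlib

open Set

def IsCone {X : Type*} [NormedAddCommGroup X] [NormedSpace ℝ X] (C : Set X) : Prop :=
  0 ∈ C ∧ ∀ t : ℝ, 0 ≤ t → ∀ x ∈ C, t • x ∈ C

theorem closure_convexHull_normBase_closure
    {X : Type*} [NormedAddCommGroup X] [NormedSpace ℝ X]
    (C : Set X) (hC : IsCone C) :
    closure (convexHull ℝ (closure C ∩ Metric.sphere (0:X) 1)) =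
      closure (convexHull ℝ (C ∩ Metric.sphere (0:X) 1)) := by
  apply le_antisymm
  · -- key: closure C ∩ sphere ⊆ closure (C ∩ sphere)
    have key : closure C ∩ Metric.sphere (0:X) 1 ⊆ closure (C ∩ Metric.sphere (0:X) 1) := by
      rintro x ⟨hx, hxs⟩
      have hxn : ‖x‖ = 1 := by simpa using hxs
      obtain ⟨u, hu, hul⟩ := mem_closure_iff_seq_limit.mp hx
      have hnorm : Filter.Tendsto (fun n => ‖u n‖) Filter.atTop (nhds 1) := by
        simpa [hxn, Function.comp_def] using (continuous_norm.continuousAt.tendsto.comp hul)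
      have hpos : ∀ᶠ n in Filter.atTop, 0 < ‖u n‖ :=
        hnorm.eventually (eventually_gt_nhds (by norm_num))
      have hinv : Filter.Tendsto (fun n => ‖u n‖⁻¹) Filter.atTop (nhds 1) := by
        simpa using hnorm.inv₀ one_ne_zero
      have hv : Filter.Tendsto (fun n => ‖u n‖⁻¹ • u n) Filter.atTop (nhds x) := by
        simpa using hinv.smul hul
      refine mem_closure_of_tendsto hv ?_
      filter_upwards [hpos] with n hn
      refine ⟨hC.2 _ (inv_nonneg.mpr hn.le) _ (hu n), ?_⟩
      simp [norm_smul, abs_of_pos (inv_pos.mpr hn), inv_mul_cancel₀ hn.ne']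
    calc closure (convexHull ℝ (closure C ∩ Metric.sphere (0:X) 1))
        ≤ closure (convexHull ℝ (closure (C ∩ Metric.sphere (0:X) 1))) := by
          exact closure_mono (convexHull_mono key)
      _ ≤ closure (convexHull ℝ (C ∩ Metric.sphere (0:X) 1)) := by
          refine closure_minimal ?_ isClosed_closure
          exact convexHull_min (closure_mono (subset_convexHull ℝ _))
            ((convex_convexHull ℝ _).closure)
  · exact closure_mono (convexHull_mono (inter_subset_inter_left _ subset_closure))
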